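/- arXiv:1509.09041 — 2 statements merged into one kernel-verified Lean document; each statement's English description precedes it below -/
import Mathlib

section
/- The function V̂₁ satisfies the Hamilton–Jacobi–Bellman equation of the problem with control set A = {−1,1}: for every x in (−1,1) with x ≠ 0, the maximum over a ∈ {−1,1} of (a²/2)·V̂₁''(x) − (a+2)·V̂₁(x) equals 0, and this maximum is attained at a = sgn(x); moreover the boundary conditions V̂₁(1) = −sinh(√6) and V̂₁(−1) = √3·sinh(√2) hold. -/
/-- The candidate value function of the infinite-horizon control problem with
control set `{-1, 1}`. -/
noncomputable def Vhat1 (x : ℝ) : ℝ :=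
  if 0 ≤ x then -Real.sinh (Real.sqrt 6 * x) else -Real.sqrt 3 * Real.sinh (Real.sqrt 2 * x)

lemma hdA (k c y : ℝ) :
    HasDerivAt (fun y : ℝ => -(k * Real.sinh (c * y))) (-(k * c * Real.cosh (c * y))) y := by
  have h : HasDerivAt (fun y : ℝ => Real.sinh (c * y)) (Real.cosh (c * y) * c) y :=
    (Real.hasDerivAt_sinh (c * y)).comp y (by simpa using (hasDerivAt_id y).const_mul c)
  have := (h.const_mul k).neg
  exact this.congr_deriv (by ring)

lemma hdB (k c y : ℝ) :
    HasDerivAt (fun y : ℝ => -(k * c * Real.cosh (c * y))) (-(k * c * c * Real.sinh (c * y))) y := by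
  have h : HasDerivAt (fun y : ℝ => Real.cosh (c * y)) (Real.sinh (c * y) * c) y :=
    (Real.hasDerivAt_cosh (c * y)).comp y (by simpa using (hasDerivAt_id y).const_mul c)
  have := (h.const_mul (k * c)).neg
  exact this.congr_deriv (by ring)

lemma second_deriv_aux (k c : ℝ) (S : Set ℝ) (hS : IsOpen S) (x : ℝ) (hx : x ∈ S)
    (hV : ∀ y ∈ S, Vhat1 y = -(k * Real.sinh (c * y))) :
    deriv (deriv Vhat1) x = -(k * c * c * Real.sinh (c * x)) := by
  have heq : Vhat1 =ᶠ[nhds x] fun y => -(k * Real.sinh (c * y)) :=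
    Filter.eventuallyEq_of_mem (hS.mem_nhds hx) hV
  have h1 : deriv Vhat1 =ᶠ[nhds x] deriv (fun y => -(k * Real.sinh (c * y))) := heq.deriv
  have h2 : deriv (fun y : ℝ => -(k * Real.sinh (c * y)))
      = fun y => -(k * c * Real.cosh (c * y)) := funext fun y => (hdA k c y).deriv
  rw [h2] at h1
  rw [h1.deriv_eq, (hdB k c x).deriv]

/-- `V̂₁` satisfies the HJB equation with control set `A = {-1, 1}`: for every
`x ∈ (-1,1) \ {0}`, the maximum over `a ∈ {-1,1}` of
`(a²/2) V̂₁''(x) - (a+2) V̂₁(x)` equals `0` and is attained at `a = sgn x`;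
moreover the boundary conditions hold. -/
theorem Vhat1_HJB :
    (∀ x ∈ Set.Ioo (-1 : ℝ) 1, x ≠ 0 →
      IsGreatest
        ((fun a : ℝ => a ^ 2 / 2 * deriv (deriv Vhat1) x - (a + 2) * Vhat1 x) ''
          ({-1, 1} : Set ℝ)) 0 ∧
      (Real.sign x) ^ 2 / 2 * deriv (deriv Vhat1) x - (Real.sign x + 2) * Vhat1 x = 0) ∧
    Vhat1 1 = -Real.sinh (Real.sqrt 6) ∧
    Vhat1 (-1) = Real.sqrt 3 * Real.sinh (Real.sqrt 2) := by
  refine ⟨?_, by simp [Vhat1], by norm_num [Vhat1, Real.sinh_neg]⟩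
  intro x _ hx0
  rcases hx0.lt_or_gt with hx | hx
  · -- x < 0
    have hVx : Vhat1 x = -(Real.sqrt 3 * Real.sinh (Real.sqrt 2 * x)) := by
      simp [Vhat1, not_le.mpr hx]
    have hdd : deriv (deriv Vhat1) x = 2 * Vhat1 x := by
      rw [second_deriv_aux (Real.sqrt 3) (Real.sqrt 2) (Set.Iio 0) isOpen_Iio x hx
        (fun y hy => by simp [Vhat1, not_le.mpr (Set.mem_Iio.mp hy)]), hVx,
        show (Real.sqrt 3 * Real.sqrt 2 * Real.sqrt 2 : ℝ) = 2 * Real.sqrt 3 by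
          rw [mul_assoc, Real.mul_self_sqrt (by norm_num)]; ring]
      ring
    have hsinh : Real.sinh (Real.sqrt 2 * x) < 0 := by
      rw [Real.sinh_neg_iff]
      exact mul_neg_of_pos_of_neg (Real.sqrt_pos.mpr (by norm_num)) hx
    have hVpos : 0 < Vhat1 x := by
      rw [hVx]
      nlinarith [Real.sqrt_pos.mpr (show (0:ℝ) < 3 by norm_num)]
    refine ⟨⟨⟨-1, Or.inl rfl, by simp only; rw [hdd]; ring⟩, ?_⟩, ?_⟩
    · rintro y ⟨a, ha, rfl⟩
      simp only [Set.mem_insert_iff, Set.mem_singleton_iff] at ha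
      rcases ha with rfl | rfl <;> simp only <;> rw [hdd] <;> nlinarith
    · rw [Real.sign_of_neg hx, hdd]; ring
  · -- 0 < x
    have hVx : Vhat1 x = -(Real.sinh (Real.sqrt 6 * x)) := by
      simp [Vhat1, hx.le]
    have hdd : deriv (deriv Vhat1) x = 6 * Vhat1 x := by
      rw [second_deriv_aux 1 (Real.sqrt 6) (Set.Ioi 0) isOpen_Ioi x hx
        (fun y hy => by simp [Vhat1, (Set.mem_Ioi.mp hy).le]), hVx,
        show (1 * Real.sqrt 6 * Real.sqrt 6 : ℝ) = 6 by
          rw [one_mul, Real.mul_self_sqrt (by norm_num)]]; ring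
    have hsinh : 0 < Real.sinh (Real.sqrt 6 * x) := by
      rw [Real.sinh_pos_iff]
      exact mul_pos (Real.sqrt_pos.mpr (by norm_num)) hx
    have hVneg : Vhat1 x < 0 := by rw [hVx]; linarith
    refine ⟨⟨⟨1, Or.inr rfl, by simp only; rw [hdd]; ring⟩, ?_⟩, ?_⟩
    · rintro y ⟨a, ha, rfl⟩
      simp only [Set.mem_insert_iff, Set.mem_singleton_iff] at ha
      rcases ha with rfl | rfl <;> simp only <;> rw [hdd] <;> nlinarith
    · rw [Real.sign_of_pos hx, hdd]; ring
end

section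
/- If the control set of the first example is enlarged from {−1,1} to the interval [−1,1], the HJB equation for V̂₁ fails: for every x in (0,1), the supremum over a ∈ [−1,1] of (a²/2)·V̂₁''(x) − (a+2)·V̂₁(x) is strictly positive (indeed it equals (25/12)·sinh(√6·x), attained at a = 1/6, not at a = sgn(x) = 1); in particular the Markov policy π(x) = sgn(x) no longer satisfies the HJB equation sup_{a∈[−1,1]}[(a²/2)·V̂₁''(x) − (a+2)·V̂₁(x)] = 0 on (0,1). -/
lemma Vhat1_eq_on_pos : ∀ y ∈ Set.Ioi (0:ℝ), Vhat1 y = -Real.sinh (Real.sqrt 6 * y) := by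
  intro y hy
  simp [Vhat1, le_of_lt (Set.mem_Ioi.mp hy)]

lemma Vhat1_eventually (x : ℝ) (hx : 0 < x) :
    Vhat1 =ᶠ[nhds x] fun y => -Real.sinh (Real.sqrt 6 * y) :=
  Filter.eventuallyEq_of_mem (Ioi_mem_nhds hx) Vhat1_eq_on_pos

lemma deriv_g : deriv (fun y : ℝ => -Real.sinh (Real.sqrt 6 * y))
    = fun y => -(Real.sqrt 6 * Real.cosh (Real.sqrt 6 * y)) := by
  funext y
  have : HasDerivAt (fun y : ℝ => -Real.sinh (Real.sqrt 6 * y))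
      (-(Real.cosh (Real.sqrt 6 * y) * (Real.sqrt 6 * 1))) y := by
    exact (((hasDerivAt_id y).const_mul (Real.sqrt 6)).sinh).neg
  simpa [mul_comm] using this.deriv

lemma deriv_Vhat1_eventually (x : ℝ) (hx : 0 < x) :
    deriv Vhat1 =ᶠ[nhds x] fun y => -(Real.sqrt 6 * Real.cosh (Real.sqrt 6 * y)) := by
  refine Filter.eventuallyEq_of_mem (Ioi_mem_nhds hx) (fun y hy => ?_)
  have := (Vhat1_eventually y (Set.mem_Ioi.mp hy)).deriv_eq
  rw [this, deriv_g]

lemma deriv2_Vhat1 (x : ℝ) (hx : 0 < x) :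
    deriv (deriv Vhat1) x = -6 * Real.sinh (Real.sqrt 6 * x) := by
  rw [(deriv_Vhat1_eventually x hx).deriv_eq]
  have h : HasDerivAt (fun y : ℝ => -(Real.sqrt 6 * Real.cosh (Real.sqrt 6 * y)))
      (-(Real.sqrt 6 * (Real.sinh (Real.sqrt 6 * x) * (Real.sqrt 6 * 1)))) x := by
    exact ((((hasDerivAt_id x).const_mul (Real.sqrt 6)).cosh).const_mul (Real.sqrt 6)).neg
  rw [h.deriv]
  have h6 : Real.sqrt 6 * Real.sqrt 6 = 6 := Real.mul_self_sqrt (by norm_num)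
  linear_combination (-Real.sinh (Real.sqrt 6 * x)) * h6

/-- If the control set is enlarged from `{-1,1}` to `[-1,1]`, the HJB equation
for `V̂₁` fails: for every `x ∈ (0,1)` the supremum over `a ∈ [-1,1]` of
`(a²/2) V̂₁''(x) - (a+2) V̂₁(x)` is strictly positive, equal to
`(25/12) sinh(√6 x)`, attained at `a = 1/6` and not at `a = sgn x = 1`. -/
theorem Vhat1_HJB_fails_on_interval (x : ℝ) (hx : x ∈ Set.Ioo (0 : ℝ) 1) :
    IsGreatest
      ((fun a : ℝ => a ^ 2 / 2 * deriv (deriv Vhat1) x - (a + 2) * Vhat1 x) ''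
        Set.Icc (-1 : ℝ) 1) (25 / 12 * Real.sinh (Real.sqrt 6 * x)) ∧
    0 < 25 / 12 * Real.sinh (Real.sqrt 6 * x) ∧
    ((1 / 6 : ℝ) ^ 2 / 2 * deriv (deriv Vhat1) x - (1 / 6 + 2) * Vhat1 x
      = 25 / 12 * Real.sinh (Real.sqrt 6 * x)) ∧
    ((1 : ℝ) ^ 2 / 2 * deriv (deriv Vhat1) x - (1 + 2) * Vhat1 x
      < 25 / 12 * Real.sinh (Real.sqrt 6 * x)) := by
  obtain ⟨hx0, hx1⟩ := hx
  have hV : Vhat1 x = -Real.sinh (Real.sqrt 6 * x) := Vhat1_eq_on_pos x hx0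
  have hV2 := deriv2_Vhat1 x hx0
  set s := Real.sinh (Real.sqrt 6 * x) with hs
  have hspos : 0 < s := Real.sinh_pos_iff.mpr (by positivity)
  rw [hV, hV2]
  refine ⟨⟨⟨1/6, by norm_num, by ring⟩, ?_⟩, by positivity, by ring, by nlinarith⟩
  rintro v ⟨a, ⟨ha1, ha2⟩, rfl⟩
  simp only
  nlinarith [sq_nonneg (a - 1/6), hspos]
end
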